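/- arXiv:2603.22465 — 2 statements merged into one kernel-verified Lean document; each statement's English description precedes it below -/
import Mathlib

section
/- Let C be a real-valued random variable with finite second moment and let f(c) = c. If Cov(C, φ(C)) = 0 for φ strictly decreasing (or more specifically, if Cov(C, φ(C)) = 0 forces degeneracy in the Chebyshev association inequality with f strictly increasing and φ strictly decreasing), then C is almost surely constant. -/
open MeasureTheory

/-- Equality case of Chebyshev's association inequality with the identity
(strictly increasing) and a strictly decreasing `φ`: if the covariance
`Cov(C, φ(C)) = 0`, i.e. `E[C·φ(C)] = E[C]·E[φ(C)]`, then `C` is almost surely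
constant. -/
theorem chebyshev_association_equality_case
    {Ω : Type*} [MeasurableSpace Ω] (μ : Measure Ω) [IsProbabilityMeasure μ]
    (C : Ω → ℝ) (φ : ℝ → ℝ)
    (hC : Measurable C)
    (hC2 : MemLp C 2 μ)
    (hφ : StrictAnti φ)
    (hφint : Integrable (fun ω => φ (C ω)) μ)
    (hprod : Integrable (fun ω => C ω * φ (C ω)) μ)
    (hcov : ∫ ω, C ω * φ (C ω) ∂μ = (∫ ω, C ω ∂μ) * ∫ ω, φ (C ω) ∂μ) :
    ∃ a : ℝ, C =ᵐ[μ] fun _ => a := by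
  have hCint : Integrable C μ := hC2.integrable one_le_two
  set h : Ω × Ω → ℝ := fun p => (C p.1 - C p.2) * (φ (C p.1) - φ (C p.2)) with hh
  have hexp : ∀ p : Ω × Ω, h p =
      (fun ω => C ω * φ (C ω)) p.1 * (fun _ => (1:ℝ)) p.2
      - C p.1 * φ (C p.2) - C p.2 * φ (C p.1)
      + (fun _ => (1:ℝ)) p.1 * (fun ω => C ω * φ (C ω)) p.2 := by
    intro p; simp [hh]; ring
  have hone : Integrable (fun _ : Ω => (1:ℝ)) μ := integrable_const 1
  have hint : Integrable h (μ.prod μ) := by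
    have h1 := hprod.mul_prod hone
    have h2 := hCint.mul_prod hφint
    have h3 := hφint.mul_prod hCint
    have h4 := hone.mul_prod hprod
    have := ((h1.sub h2).sub (by simpa [mul_comm] using h3)).add h4
    refine this.congr (Filter.Eventually.of_forall fun p => ?_)
    simp only [Pi.add_apply, Pi.sub_apply, Pi.neg_apply, hh]; ring
  have hint0 : ∫ p, h p ∂(μ.prod μ) = 0 := by
    have h1 := hprod.mul_prod hone
    have h2 := hCint.mul_prod hφint
    have h3 := hφint.mul_prod hCint
    have h4 := hone.mul_prod hprod
    have hfun : h = fun p : Ω × Ω => C p.1 * φ (C p.1) * 1 - C p.1 * φ (C p.2)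
        - φ (C p.1) * C p.2 + 1 * (C p.2 * φ (C p.2)) := by
      funext p; simp only [hh]; ring
    rw [hfun]
    rw [show (∫ p : Ω × Ω, (fun p : Ω × Ω => C p.1 * φ (C p.1) * 1 - C p.1 * φ (C p.2)
        - φ (C p.1) * C p.2 + 1 * (C p.2 * φ (C p.2))) p ∂(μ.prod μ)) =
        (∫ p : Ω × Ω, C p.1 * φ (C p.1) * 1 ∂(μ.prod μ))
        - (∫ p : Ω × Ω, C p.1 * φ (C p.2) ∂(μ.prod μ))
        - (∫ p : Ω × Ω, φ (C p.1) * C p.2 ∂(μ.prod μ))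
        + (∫ p : Ω × Ω, 1 * (C p.2 * φ (C p.2)) ∂(μ.prod μ)) from by
      have h12 : Integrable (fun z : Ω × Ω => C z.1 * φ (C z.1) * 1 - C z.1 * φ (C z.2))
          (μ.prod μ) := h1.sub h2
      have h123 : Integrable (fun z : Ω × Ω => C z.1 * φ (C z.1) * 1 - C z.1 * φ (C z.2)
          - φ (C z.1) * C z.2) (μ.prod μ) := h12.sub h3
      rw [← integral_sub h1 h2, ← integral_sub h12 h3, ← integral_add h123 h4]]
    have e1 : ∫ p : Ω × Ω, C p.1 * φ (C p.1) * 1 ∂(μ.prod μ) =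
        (∫ ω, C ω * φ (C ω) ∂μ) * ∫ _ : Ω, (1:ℝ) ∂μ :=
      integral_prod_mul (fun ω => C ω * φ (C ω)) (fun _ => (1:ℝ))
    have e2 : ∫ p : Ω × Ω, C p.1 * φ (C p.2) ∂(μ.prod μ) =
        (∫ ω, C ω ∂μ) * ∫ ω, φ (C ω) ∂μ :=
      integral_prod_mul (fun ω => C ω) (fun ω => φ (C ω))
    have e3 : ∫ p : Ω × Ω, φ (C p.1) * C p.2 ∂(μ.prod μ) =
        (∫ ω, φ (C ω) ∂μ) * ∫ ω, C ω ∂μ :=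
      integral_prod_mul (fun ω => φ (C ω)) (fun ω => C ω)
    have e4 : ∫ p : Ω × Ω, 1 * (C p.2 * φ (C p.2)) ∂(μ.prod μ) =
        (∫ _ : Ω, (1:ℝ) ∂μ) * ∫ ω, C ω * φ (C ω) ∂μ :=
      integral_prod_mul (fun _ => (1:ℝ)) (fun ω => C ω * φ (C ω))
    rw [e1, e2, e3, e4]
    simp only [integral_const, probReal_univ, measure_univ, ENNReal.toReal_one, smul_eq_mul, one_mul, mul_one]
    rw [hcov]; ring
  have hnonpos : ∀ p : Ω × Ω, h p ≤ 0 := by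
    intro p
    rcases le_total (C p.1) (C p.2) with hle | hle
    · exact mul_nonpos_of_nonpos_of_nonneg (by linarith) (by
        have := hφ.antitone hle; linarith)
    · exact mul_nonpos_of_nonneg_of_nonpos (by linarith) (by
        have := hφ.antitone hle; linarith)
  have hzero : h =ᵐ[μ.prod μ] 0 := by
    have hneg : 0 ≤ᵐ[μ.prod μ] fun p => -h p :=
      Filter.Eventually.of_forall fun p => by simpa using hnonpos p
    have : ∫ p, -h p ∂(μ.prod μ) = 0 := by rw [integral_neg, hint0, neg_zero]
    have := (integral_eq_zero_iff_of_nonneg_ae hneg hint.neg).mp this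
    filter_upwards [this] with p hp
    simpa using congrArg Neg.neg hp
  have heq : ∀ᵐ p ∂(μ.prod μ), C p.1 = C p.2 := by
    filter_upwards [hzero] with p hp
    by_contra hne
    rcases lt_or_gt_of_ne hne with hlt | hlt
    · have h1 : C p.1 - C p.2 < 0 := by linarith
      have h2 : 0 < φ (C p.1) - φ (C p.2) := by have := hφ hlt; linarith
      have : h p < 0 := mul_neg_of_neg_of_pos h1 h2
      simp [hp] at this
    · have h1 : 0 < C p.1 - C p.2 := by linarith
      have h2 : φ (C p.1) - φ (C p.2) < 0 := by have := hφ hlt; linarith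
      have : h p < 0 := mul_neg_of_pos_of_neg h1 h2
      simp [hp] at this
  have hae : ∀ᵐ x ∂μ, ∀ᵐ y ∂μ, C x = C y := Measure.ae_ae_of_ae_prod heq
  obtain ⟨x₀, hx₀⟩ := hae.exists
  exact ⟨C x₀, by filter_upwards [hx₀] with y hy using hy.symm⟩
end

section
/- Let (G_j, C_j), j = 1, …, d, be i.i.d. pairs of strictly positive random variables with G_j independent of C_j and continuous distributions. Let m^{TopK} select the k indices of largest G_j and m^{CWMP} select the k indices of largest ratio G_j/C_j. Then E[∑_j m_j^{CWMP} C_j] ≤ E[∑_j m_j^{TopK} C_j] = k·E[C_1]. -/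
open MeasureTheory ProbabilityTheory


lemma aux_sum_rank {d k : ℕ} (hk : k ≤ d) (f : Fin d → ℝ) (hf : Function.Injective f) :
    (∑ j : Fin d, (if (Finset.univ.filter fun i => f j ≤ f i).card ≤ k then (1:ℝ) else 0))
      = k := by
  classical
  set r : Fin d → ℕ := fun j => (Finset.univ.filter fun i => f j ≤ f i).card with hr
  have hmono : ∀ a b, f a < f b → r b < r a := by
    intro a b hab
    apply Finset.card_lt_card
    have hsub : (Finset.univ.filter fun i => f b ≤ f i)
        ⊆ Finset.univ.filter fun i => f a ≤ f i := by
      intro i hi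
      simp only [Finset.mem_filter, Finset.mem_univ, true_and] at hi ⊢
      exact hab.le.trans hi
    rw [Finset.ssubset_iff_of_subset hsub]
    refine ⟨a, ?_, ?_⟩
    · simp
    · simp only [Finset.mem_filter, Finset.mem_univ, true_and]
      exact not_le.2 hab
  have hinj : Function.Injective r := by
    intro a b hab
    by_contra hne
    rcases lt_trichotomy (f a) (f b) with h | h | h
    · exact absurd hab (hmono a b h).ne'
    · exact hne (hf h)
    · exact absurd hab (hmono b a h).ne
  have hr1 : ∀ j, r j ∈ Finset.Icc 1 d := by
    intro j
    simp only [Finset.mem_Icc]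
    constructor
    · have : j ∈ Finset.univ.filter fun i => f j ≤ f i := by simp
      exact Finset.card_pos.2 ⟨j, this⟩
    · simpa using Finset.card_filter_le Finset.univ (fun i => f j ≤ f i)
  have himage : Finset.univ.image r = Finset.Icc 1 d := by
    apply Finset.eq_of_subset_of_card_le
    · intro x hx
      rcases Finset.mem_image.1 hx with ⟨j, _, rfl⟩
      exact hr1 j
    · rw [Nat.card_Icc, Finset.card_image_of_injective _ hinj]
      simp
  have hcard : (Finset.univ.filter fun j => r j ≤ k).card = k := by
    have h2 : ((Finset.univ.filter fun j => r j ≤ k).image r)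
        = (Finset.univ.image r).filter (fun x => x ≤ k) := by
      rw [Finset.filter_image]
    have h3 := Finset.card_image_of_injective (Finset.univ.filter fun j => r j ≤ k) hinj
    rw [h2, himage] at h3
    have h4 : (Finset.Icc 1 d).filter (fun x => x ≤ k) = Finset.Icc 1 k := by
      ext x
      simp only [Finset.mem_filter, Finset.mem_Icc]
      omega
    rw [h4, Nat.card_Icc] at h3
    omega
  rw [Finset.sum_boole]
  norm_num [hcard]
  exact hcard

lemma aux_chebyshev {ν : Measure ℝ} [IsProbabilityMeasure ν]
    {h : ℝ → ℝ} (hmeas : Measurable h) (h0 : ∀ c, 0 ≤ h c) (h1 : ∀ c, h c ≤ 1)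
    (hanti : ∀ c c', 0 < c → 0 < c' → c ≤ c' → h c' ≤ h c)
    (hpos : ∀ᵐ c ∂ν, 0 < c) (hint : Integrable (fun c => c) ν) :
    ∫ c, c * h c ∂ν ≤ (∫ c, c ∂ν) * ∫ c, h c ∂ν := by
  have habs : ∀ c, |h c| ≤ 1 := fun c => abs_le.2 ⟨by linarith [h0 c], h1 c⟩
  have hhint : Integrable h ν :=
    (integrable_const (1:ℝ)).mono' hmeas.aestronglyMeasurable
      (Filter.Eventually.of_forall fun c => by
        rw [Real.norm_eq_abs]; simpa using habs c)
  have hch : Integrable (fun c => c * h c) ν := by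
    refine hint.abs.mono' (measurable_id.mul hmeas).aestronglyMeasurable
      (Filter.Eventually.of_forall fun c => ?_)
    rw [Real.norm_eq_abs, abs_mul]
    calc |c| * |h c| ≤ |c| * 1 := mul_le_mul_of_nonneg_left (habs c) (abs_nonneg c)
    _ = |c| := mul_one _
  have hm1 : ∀ᵐ p : ℝ × ℝ ∂(ν.prod ν), 0 < p.1 := by
    have hmap : (ν.prod ν).map Prod.fst = ν := by simp
    rw [← hmap] at hpos
    exact (ae_map_iff measurable_fst.aemeasurable
      (measurableSet_Ioi : MeasurableSet (Set.Ioi (0:ℝ)))).1 hpos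
  have hm2 : ∀ᵐ p : ℝ × ℝ ∂(ν.prod ν), 0 < p.2 := by
    have hmap : (ν.prod ν).map Prod.snd = ν := by simp
    rw [← hmap] at hpos
    exact (ae_map_iff measurable_snd.aemeasurable
      (measurableSet_Ioi : MeasurableSet (Set.Ioi (0:ℝ)))).1 hpos
  have key : 0 ≤ ∫ p : ℝ × ℝ, (p.1 - p.2) * (h p.2 - h p.1) ∂(ν.prod ν) := by
    apply integral_nonneg_of_ae
    filter_upwards [hm1, hm2] with p hp1 hp2
    rcases le_total p.1 p.2 with hle | hle
    · have h1' := hanti p.1 p.2 hp1 hp2 hle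
      have : (p.1 - p.2) * (h p.2 - h p.1) = (p.2 - p.1) * (h p.1 - h p.2) := by ring
      rw [this]
      exact mul_nonneg (by linarith) (by linarith)
    · have h1' := hanti p.2 p.1 hp2 hp1 hle
      exact mul_nonneg (by linarith) (by linarith)
  have hI1 : Integrable (fun p : ℝ × ℝ => p.1 * h p.2) (ν.prod ν) := hint.mul_prod hhint
  have hI4 : Integrable (fun p : ℝ × ℝ => h p.1 * p.2) (ν.prod ν) := hhint.mul_prod hint
  have hI2 : Integrable (fun p : ℝ × ℝ => p.1 * h p.1) (ν.prod ν) := by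
    simpa using hch.mul_prod (integrable_const (1:ℝ))
  have hI3 : Integrable (fun p : ℝ × ℝ => p.2 * h p.2) (ν.prod ν) := by
    simpa using (integrable_const (1:ℝ)).mul_prod hch
  have e1 : ∫ p : ℝ × ℝ, p.1 * h p.2 ∂(ν.prod ν) = (∫ c, c ∂ν) * ∫ c, h c ∂ν :=
    integral_prod_mul (fun c => c) h
  have e4 : ∫ p : ℝ × ℝ, h p.1 * p.2 ∂(ν.prod ν) = (∫ c, h c ∂ν) * ∫ c, c ∂ν :=
    integral_prod_mul h (fun c => c)
  have e2 : ∫ p : ℝ × ℝ, p.1 * h p.1 ∂(ν.prod ν) = ∫ c, c * h c ∂ν := by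
    have := integral_prod_mul (μ := ν) (ν := ν) (fun c => c * h c) (fun _ => (1:ℝ))
    simpa using this
  have e3 : ∫ p : ℝ × ℝ, p.2 * h p.2 ∂(ν.prod ν) = ∫ c, c * h c ∂ν := by
    have := integral_prod_mul (μ := ν) (ν := ν) (fun _ => (1:ℝ)) (fun c => c * h c)
    simpa using this
  have expand : ∫ p : ℝ × ℝ, (p.1 - p.2) * (h p.2 - h p.1) ∂(ν.prod ν)
      = ((∫ c, c ∂ν) * ∫ c, h c ∂ν) * 2 - (∫ c, c * h c ∂ν) * 2 := by
    have hfe : (fun p : ℝ × ℝ => (p.1 - p.2) * (h p.2 - h p.1))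
        = fun p : ℝ × ℝ => (p.1 * h p.2 + h p.1 * p.2) - (p.1 * h p.1 + p.2 * h p.2) := by
      funext p; ring
    have hIA : Integrable (fun p : ℝ × ℝ => p.1 * h p.2 + h p.1 * p.2) (ν.prod ν) := hI1.add hI4
    have hIB : Integrable (fun p : ℝ × ℝ => p.1 * h p.1 + p.2 * h p.2) (ν.prod ν) := hI2.add hI3
    rw [hfe, integral_sub hIA hIB, integral_add hI1 hI4,
        integral_add hI2 hI3, e1, e2, e3, e4]
    ring
  rw [expand] at key
  linarith

lemma aux_indepFun_prod_assoc {Ω α β γ : Type*} [MeasurableSpace Ω] [mα : MeasurableSpace α]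
    [mβ : MeasurableSpace β] [mγ : MeasurableSpace γ] {μ : Measure Ω} [IsProbabilityMeasure μ]
    {X : Ω → α} {Y : Ω → β} {Z : Ω → γ}
    (hX : Measurable X) (hY : Measurable Y) (hZ : Measurable Z)
    (hXY : IndepFun X Y μ) (hXY_Z : IndepFun (fun ω => (X ω, Y ω)) Z μ) :
    IndepFun X (fun ω => (Y ω, Z ω)) μ := by
  have hYZ : IndepFun Y Z μ := hXY_Z.comp measurable_snd measurable_id
  set W : Ω → β × γ := fun ω => (Y ω, Z ω) with hWdef
  have hW : Measurable W := hY.prodMk hZ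
  set p1 : Set (Set Ω) := Set.preimage X '' {A | MeasurableSet A} with hp1def
  set p2 : Set (Set Ω) := Set.preimage W ''
      (Set.image2 (· ×ˢ ·) { s : Set β | MeasurableSet s } { t : Set γ | MeasurableSet t })
      with hp2def
  have hgen1 : MeasurableSpace.comap X mα = MeasurableSpace.generateFrom p1 := by
    conv_lhs => rw [← MeasurableSpace.generateFrom_measurableSet (α := α)]
    rw [MeasurableSpace.comap_generateFrom]
  have hgen2 : MeasurableSpace.comap W Prod.instMeasurableSpace
      = MeasurableSpace.generateFrom p2 := by
    conv_lhs => rw [← generateFrom_prod]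
    rw [MeasurableSpace.comap_generateFrom]
  have hpi1 : IsPiSystem p1 :=
    (MeasurableSpace.isPiSystem_measurableSet (α := α)).comap X
  have hpi2 : IsPiSystem p2 := (isPiSystem_prod (α := β) (β := γ)).comap W
  have hsets : IndepSets p1 p2 μ := by
    rw [IndepSets_iff]
    rintro t1 t2 ⟨A, hA, rfl⟩ ⟨u, hu, rfl⟩
    rcases hu with ⟨B, hB, D, hD, rfl⟩
    simp only [Set.mem_setOf_eq] at hA hB hD
    have hpre : W ⁻¹' (B ×ˢ D) = Y ⁻¹' B ∩ Z ⁻¹' D := Set.mk_preimage_prod Y Z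
    have hXYpre : X ⁻¹' A ∩ Y ⁻¹' B = (fun ω => (X ω, Y ω)) ⁻¹' (A ×ˢ B) :=
      (Set.mk_preimage_prod X Y).symm
    have h1 := hXY_Z.measure_inter_preimage_eq_mul (A ×ˢ B) D (hA.prod hB) hD
    have h2 := hXY.measure_inter_preimage_eq_mul A B hA hB
    have h3 := hYZ.measure_inter_preimage_eq_mul B D hB hD
    rw [hpre, ← Set.inter_assoc, hXYpre, h1, ← hXYpre, h2, h3]
    ring
  exact IndepSets.indep hX.comap_le hW.comap_le hpi1 hpi2 hgen1 hgen2 hsets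

lemma aux_key_le {Ω Γ : Type*} [MeasurableSpace Ω] [MeasurableSpace Γ]
    (μ : Measure Ω) [IsProbabilityMeasure μ]
    {Cj : Ω → ℝ} {Zj : Ω → Γ} (hCj : Measurable Cj) (hZj : Measurable Zj)
    (hind : IndepFun Cj Zj μ) (hCint : Integrable Cj μ) (hCpos : ∀ᵐ ω ∂μ, 0 < Cj ω)
    {H : ℝ → Γ → ℝ} (hH : Measurable fun p : ℝ × Γ => H p.1 p.2)
    (h0 : ∀ c z, 0 ≤ H c z) (h1 : ∀ c z, H c z ≤ 1)
    (hanti : ∀ᵐ z ∂(μ.map Zj), ∀ c c', 0 < c → 0 < c' → c ≤ c' → H c' z ≤ H c z)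
    {m : Ω → ℝ} (hm : ∀ ω, m ω = H (Cj ω) (Zj ω)) :
    ∫ ω, m ω * Cj ω ∂μ ≤ (∫ ω, m ω ∂μ) * ∫ ω, Cj ω ∂μ := by
  classical
  set ν := μ.map Cj with hνdef
  set ρ := μ.map Zj with hρdef
  have hν : IsProbabilityMeasure ν := Measure.isProbabilityMeasure_map hCj.aemeasurable
  have hρ : IsProbabilityMeasure ρ := Measure.isProbabilityMeasure_map hZj.aemeasurable
  have hmap : μ.map (fun ω => (Cj ω, Zj ω)) = ν.prod ρ :=
    (indepFun_iff_map_prod_eq_prod_map_map hCj.aemeasurable hZj.aemeasurable).1 hind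
  have hpair : Measurable fun ω => (Cj ω, Zj ω) := hCj.prodMk hZj
  have hF1meas : Measurable fun p : ℝ × Γ => H p.1 p.2 * p.1 := hH.mul measurable_fst
  have habsH : ∀ c z, |H c z| ≤ 1 := fun c z => abs_le.2 ⟨by linarith [h0 c z], h1 c z⟩
  have hFint : Integrable (fun p : ℝ × Γ => H p.1 p.2) (ν.prod ρ) :=
    (integrable_const (1:ℝ)).mono' hH.aestronglyMeasurable
      (Filter.Eventually.of_forall fun p => by rw [Real.norm_eq_abs]; simpa using habsH p.1 p.2)
  have hid_int : Integrable (fun c : ℝ => c) ν := by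
    rw [hνdef]
    exact (integrable_map_measure measurable_id.aestronglyMeasurable hCj.aemeasurable).2 hCint
  have hc1int : Integrable (fun p : ℝ × Γ => p.1) (ν.prod ρ) := by
    simpa using hid_int.mul_prod (integrable_const (1:ℝ))
  have hF1int : Integrable (fun p : ℝ × Γ => H p.1 p.2 * p.1) (ν.prod ρ) := by
    refine hc1int.abs.mono' hF1meas.aestronglyMeasurable
      (Filter.Eventually.of_forall fun p => ?_)
    rw [Real.norm_eq_abs, abs_mul]
    calc |H p.1 p.2| * |p.1| ≤ 1 * |p.1| :=
      mul_le_mul_of_nonneg_right (habsH p.1 p.2) (abs_nonneg _)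
    _ = |p.1| := one_mul _
  have hin1 : ∫ p : ℝ × Γ, H p.1 p.2 * p.1 ∂(ν.prod ρ) = ∫ ω, m ω * Cj ω ∂μ := by
    rw [← hmap, integral_map hpair.aemeasurable hF1meas.aestronglyMeasurable]
    refine integral_congr_ae (Filter.Eventually.of_forall fun ω => ?_)
    show H (Cj ω) (Zj ω) * Cj ω = m ω * Cj ω
    rw [hm ω]
  have hin2 : ∫ p : ℝ × Γ, H p.1 p.2 ∂(ν.prod ρ) = ∫ ω, m ω ∂μ := by
    rw [← hmap, integral_map hpair.aemeasurable hH.aestronglyMeasurable]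
    refine integral_congr_ae (Filter.Eventually.of_forall fun ω => ?_)
    show H (Cj ω) (Zj ω) = m ω
    rw [hm ω]
  have hin3 : ∫ c, c ∂ν = ∫ ω, Cj ω ∂μ := by
    rw [hνdef]
    exact integral_map hCj.aemeasurable measurable_id.aestronglyMeasurable
  have hνpos : ∀ᵐ c ∂ν, 0 < c := by
    rw [hνdef]
    exact (ae_map_iff hCj.aemeasurable (measurableSet_Ioi : MeasurableSet (Set.Ioi (0:ℝ)))).2 hCpos
  rw [← hin1, ← hin2, ← hin3]
  rw [integral_prod_symm _ hF1int, integral_prod_symm _ hFint, ← integral_mul_const]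
  apply integral_mono_ae
  · exact hF1int.integral_prod_right
  · exact (hFint.integral_prod_right).mul_const _
  · filter_upwards [hanti] with z hz
    have hcheb := aux_chebyshev (ν := ν)
      (hmeas := hH.comp (measurable_id.prodMk measurable_const))
      (h0 := fun c => h0 c z) (h1 := fun c => h1 c z)
      (hanti := fun c c' hc hc' hcc => hz c c' hc hc' hcc) hνpos hid_int
    calc ∫ c, H c z * c ∂ν = ∫ c, c * H c z ∂ν := by
          exact integral_congr_ae (Filter.Eventually.of_forall fun c => mul_comm _ _)
    _ ≤ (∫ c, c ∂ν) * ∫ c, H c z ∂ν := hcheb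
    _ = (∫ c, H c z ∂ν) * ∫ c, c ∂ν := mul_comm _ _

set_option maxHeartbeats 2000000 in
/-- Proposition 2: for i.i.d. pairs `(G j, C j)` of strictly positive random
variables with `G j` independent of `C j` and continuous distributions (so no
ties a.s.), the expected energy of the CWMP mask (top-k ratios `G j / C j`) is
at most that of the Top-K mask (top-k values `G j`), which equals `k·E[C 0]`. -/
theorem cwmp_vs_topk_expected_energy
    {Ω : Type*} [MeasurableSpace Ω] (μ : Measure Ω) [IsProbabilityMeasure μ]
    (d k : ℕ) [NeZero d] (hk : k ≤ d)
    (G C : Fin d → Ω → ℝ)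
    (hGmeas : ∀ j, Measurable (G j)) (hCmeas : ∀ j, Measurable (C j))
    (hGpos : ∀ j, ∀ᵐ ω ∂μ, 0 < G j ω) (hCpos : ∀ j, ∀ᵐ ω ∂μ, 0 < C j ω)
    (hCint : ∀ j, Integrable (C j) μ)
    -- the pairs (G j, C j) are i.i.d.
    (hiid : iIndepFun (fun j ω => (G j ω, C j ω)) μ)
    (hident : ∀ j, IdentDistrib (fun ω => (G j ω, C j ω))
      (fun ω => (G 0 ω, C 0 ω)) μ μ)
    -- G j is independent of C j
    (hGC : ∀ j, IndepFun (G j) (C j) μ)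
    -- continuity of the distributions: almost surely no ties
    (hties : ∀ᵐ ω ∂μ, Function.Injective (fun j => G j ω) ∧
      Function.Injective (fun j => G j ω / C j ω))
    -- the two masks, as indicator functions
    (mTopK mCWMP : Fin d → Ω → ℝ)
    (hTopK : ∀ j ω, mTopK j ω =
      if (Finset.univ.filter fun i => G j ω ≤ G i ω).card ≤ k then 1 else 0)
    (hCWMP : ∀ j ω, mCWMP j ω =
      if (Finset.univ.filter fun i => G j ω / C j ω ≤ G i ω / C i ω).card ≤ k
      then 1 else 0) :
    ∫ ω, ∑ j, mCWMP j ω * C j ω ∂μ ≤ ∫ ω, ∑ j, mTopK j ω * C j ω ∂μ ∧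
    ∫ ω, ∑ j, mTopK j ω * C j ω ∂μ = (k : ℝ) * ∫ ω, C 0 ω ∂μ := by
  classical
  have hmain : ∀ j : Fin d,
      Integrable (fun ω => mTopK j ω * C j ω) μ ∧
      Integrable (fun ω => mCWMP j ω * C j ω) μ ∧
      Integrable (mTopK j) μ ∧ Integrable (mCWMP j) μ ∧
      (∫ ω, mTopK j ω * C j ω ∂μ = (∫ ω, mTopK j ω ∂μ) * ∫ ω, C 0 ω ∂μ) ∧
      (∫ ω, mCWMP j ω * C j ω ∂μ ≤ (∫ ω, mCWMP j ω ∂μ) * ∫ ω, C 0 ω ∂μ) := by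
    intro j
    -- identical distribution of the costs
    have hCeq : ∫ ω, C j ω ∂μ = ∫ ω, C 0 ω ∂μ :=
      ((hident j).comp measurable_snd).integral_eq
    -- the auxiliary observation Zj, independent of C j
    set Zj : Ω → ℝ × (Fin d → ℝ) × (Fin d → ℝ) := fun ω =>
      (G j ω, fun i => if i = j then 0 else G i ω,
        fun i => if i = j then 0 else G i ω / C i ω) with hZjdef
    have hZmeas : Measurable Zj := by
      refine (hGmeas j).prodMk (Measurable.prodMk ?_ ?_) <;>
        refine measurable_pi_lambda _ fun i => ?_
      · by_cases h : i = j
        · simp only [h, if_pos]; exact measurable_const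
        · simp only [h, if_neg, if_false]; exact hGmeas i
      · by_cases h : i = j
        · simp only [h, if_pos]; exact measurable_const
        · simp only [h, if_neg, if_false]; exact (hGmeas i).div (hCmeas i)
    -- independence of C j from Zj
    have hf_meas : ∀ i : Fin d, Measurable (fun ω => (G i ω, C i ω)) :=
      fun i => (hGmeas i).prodMk (hCmeas i)
    have h1 : IndepFun (fun ω (i : ({j} : Finset (Fin d))) => (G i ω, C i ω))
        (fun ω (i : (({j} : Finset (Fin d))ᶜ : Finset (Fin d))) => (G i ω, C i ω)) μ :=
      hiid.indepFun_finset {j} {j}ᶜ disjoint_compl_right hf_meas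
    have hφ : Measurable fun v : ({j} : Finset (Fin d)) → ℝ × ℝ =>
        ((v ⟨j, Finset.mem_singleton_self j⟩).2, (v ⟨j, Finset.mem_singleton_self j⟩).1) :=
      ((measurable_pi_apply _).snd).prodMk ((measurable_pi_apply _).fst)
    have h2 : IndepFun (fun ω => (C j ω, G j ω))
        (fun ω (i : (({j} : Finset (Fin d))ᶜ : Finset (Fin d))) => (G i ω, C i ω)) μ :=
      h1.comp hφ measurable_id
    set W : Ω → ((({j} : Finset (Fin d))ᶜ : Finset (Fin d)) → ℝ × ℝ) :=
      fun ω i => (G i ω, C i ω) with hWdef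
    have hWmeas : Measurable W := measurable_pi_lambda _ fun i => hf_meas i
    have h3 : IndepFun (C j) (fun ω => (G j ω, W ω)) μ :=
      aux_indepFun_prod_assoc (hCmeas j) (hGmeas j) hWmeas (hGC j).symm h2
    have hmemc : ∀ i : Fin d, ¬ i = j → i ∈ (({j} : Finset (Fin d))ᶜ : Finset (Fin d)) := by
      intro i h; simpa using h
    set θ : ℝ × (((({j} : Finset (Fin d))ᶜ : Finset (Fin d))) → ℝ × ℝ) →
        ℝ × (Fin d → ℝ) × (Fin d → ℝ) := fun q =>
      (q.1,
       fun i : Fin d => if h : i = j then (0:ℝ) else (q.2 ⟨i, hmemc i h⟩).1,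
       fun i : Fin d => if h : i = j then (0:ℝ)
         else (q.2 ⟨i, hmemc i h⟩).1 / (q.2 ⟨i, hmemc i h⟩).2) with hθdef
    have hθmeas : Measurable θ := by
      refine measurable_fst.prodMk (Measurable.prodMk ?_ ?_) <;>
        refine measurable_pi_lambda _ fun i => ?_
      · by_cases h : i = j
        · simp only [hθdef, h, dif_pos]; exact measurable_const
        · simp only [hθdef, dif_neg h]
          exact ((measurable_pi_apply _).comp measurable_snd).fst
      · by_cases h : i = j
        · simp only [hθdef, h, dif_pos]; exact measurable_const
        · simp only [hθdef, dif_neg h]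
          exact (((measurable_pi_apply _).comp measurable_snd).fst).div
            (((measurable_pi_apply _).comp measurable_snd).snd)
    have hZcomp : Zj = θ ∘ (fun ω => (G j ω, W ω)) := by
      funext ω
      simp only [Function.comp_apply, hθdef, hZjdef, hWdef]
      refine Prod.ext rfl (Prod.ext ?_ ?_) <;>
        · funext i
          by_cases h : i = j <;> simp [h]
    have hindep : IndepFun (C j) Zj μ := by
      rw [hZcomp]
      exact h3.comp measurable_id hθmeas
    -- the masks as functions of (C j, Zj)
    set HT : ℝ → ℝ × (Fin d → ℝ) × (Fin d → ℝ) → ℝ := fun _ z =>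
      if (Finset.univ.filter fun i => i = j ∨ z.1 ≤ z.2.1 i).card ≤ k then 1 else 0 with hHTdef
    set HC : ℝ → ℝ × (Fin d → ℝ) × (Fin d → ℝ) → ℝ := fun c z =>
      if (Finset.univ.filter fun i => i = j ∨ z.1 / c ≤ z.2.2 i).card ≤ k then 1 else 0
      with hHCdef
    have hHTmeas : Measurable fun p : ℝ × ℝ × (Fin d → ℝ) × (Fin d → ℝ) => HT p.1 p.2 := by
      have hN : Measurable fun p : ℝ × ℝ × (Fin d → ℝ) × (Fin d → ℝ) =>
          (Finset.univ.filter fun i => i = j ∨ p.2.1 ≤ p.2.2.1 i).card := by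
        simp only [Finset.card_filter]
        refine Finset.measurable_sum _ fun i _ => ?_
        by_cases h : i = j
        · simp [h]
        · simp only [h, false_or]
          exact Measurable.ite
            (measurableSet_le measurable_snd.fst ((measurable_pi_apply i).comp
              measurable_snd.snd.fst)) measurable_const measurable_const
      have hset : MeasurableSet {p : ℝ × ℝ × (Fin d → ℝ) × (Fin d → ℝ) |
          (Finset.univ.filter fun i => i = j ∨ p.2.1 ≤ p.2.2.1 i).card ≤ k} :=
        hN (Set.to_countable (Set.Iic k)).measurableSet
      exact Measurable.ite hset measurable_const measurable_const
    have hHCmeas : Measurable fun p : ℝ × ℝ × (Fin d → ℝ) × (Fin d → ℝ) => HC p.1 p.2 := by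
      have hN : Measurable fun p : ℝ × ℝ × (Fin d → ℝ) × (Fin d → ℝ) =>
          (Finset.univ.filter fun i => i = j ∨ p.2.1 / p.1 ≤ p.2.2.2 i).card := by
        simp only [Finset.card_filter]
        refine Finset.measurable_sum _ fun i _ => ?_
        by_cases h : i = j
        · simp [h]
        · simp only [h, false_or]
          exact Measurable.ite
            (measurableSet_le (measurable_snd.fst.div measurable_fst)
              ((measurable_pi_apply i).comp measurable_snd.snd.snd))
            measurable_const measurable_const
      have hset : MeasurableSet {p : ℝ × ℝ × (Fin d → ℝ) × (Fin d → ℝ) |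
          (Finset.univ.filter fun i => i = j ∨ p.2.1 / p.1 ≤ p.2.2.2 i).card ≤ k} :=
        hN (Set.to_countable (Set.Iic k)).measurableSet
      exact Measurable.ite hset measurable_const measurable_const
    -- pointwise identification of the masks
    have hmT : ∀ ω, mTopK j ω = HT (C j ω) (Zj ω) := by
      intro ω
      rw [hTopK j ω, hHTdef]
      have hfe : (Finset.univ.filter fun i => G j ω ≤ G i ω)
          = Finset.univ.filter fun i => i = j ∨ (Zj ω).1 ≤ (Zj ω).2.1 i := by
        refine Finset.filter_congr fun i _ => ?_
        by_cases h : i = j <;> simp [h, hZjdef]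
      rw [hfe]
    have hmC : ∀ ω, mCWMP j ω = HC (C j ω) (Zj ω) := by
      intro ω
      rw [hCWMP j ω, hHCdef]
      have hfe : (Finset.univ.filter fun i => G j ω / C j ω ≤ G i ω / C i ω)
          = Finset.univ.filter fun i => i = j ∨ (Zj ω).1 / C j ω ≤ (Zj ω).2.2 i := by
        refine Finset.filter_congr fun i _ => ?_
        by_cases h : i = j <;> simp [h, hZjdef]
      rw [hfe]
    -- bounds
    have hHT0 : ∀ c z, 0 ≤ HT c z := fun c z => by rw [hHTdef]; dsimp only; split <;> norm_num
    have hHT1 : ∀ c z, HT c z ≤ 1 := fun c z => by rw [hHTdef]; dsimp only; split <;> norm_num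
    have hHC0 : ∀ c z, 0 ≤ HC c z := fun c z => by rw [hHCdef]; dsimp only; split <;> norm_num
    have hHC1 : ∀ c z, HC c z ≤ 1 := fun c z => by rw [hHCdef]; dsimp only; split <;> norm_num
    -- antitonicity
    have hantiT : ∀ᵐ z ∂(μ.map Zj), ∀ c c', 0 < c → 0 < c' → c ≤ c' → HT c' z ≤ HT c z :=
      Filter.Eventually.of_forall fun z c c' _ _ _ => le_of_eq rfl
    have hantiC : ∀ᵐ z ∂(μ.map Zj), ∀ c c', 0 < c → 0 < c' → c ≤ c' → HC c' z ≤ HC c z := by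
      have hg : ∀ᵐ z ∂(μ.map Zj), 0 < z.1 := by
        refine (ae_map_iff hZmeas.aemeasurable
          (measurable_fst (measurableSet_Ioi : MeasurableSet (Set.Ioi (0:ℝ))))).2 ?_
        filter_upwards [hGpos j] with ω hω
        simpa [hZjdef] using hω
      filter_upwards [hg] with z hz c c' hc hc' hcc
      rw [hHCdef]
      dsimp only
      by_cases hcond : (Finset.univ.filter fun i => i = j ∨ z.1 / c' ≤ z.2.2 i).card ≤ k
      · have hsub : (Finset.univ.filter fun i => i = j ∨ z.1 / c ≤ z.2.2 i)
            ⊆ Finset.univ.filter fun i => i = j ∨ z.1 / c' ≤ z.2.2 i := by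
          intro i hi
          simp only [Finset.mem_filter, Finset.mem_univ, true_and] at hi ⊢
          rcases hi with h | h
          · exact Or.inl h
          · exact Or.inr (le_trans (div_le_div_of_nonneg_left hz.le hc hcc) h)
        have : (Finset.univ.filter fun i => i = j ∨ z.1 / c ≤ z.2.2 i).card ≤ k :=
          le_trans (Finset.card_le_card hsub) hcond
        rw [if_pos hcond, if_pos this]
      · rw [if_neg hcond]
        split <;> norm_num
    -- apply the key lemma
    have hkeyC := aux_key_le μ (hCmeas j) hZmeas hindep (hCint j) (hCpos j)
      hHCmeas hHC0 hHC1 hantiC hmC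
    have hkeyT := aux_key_le μ (hCmeas j) hZmeas hindep (hCint j) (hCpos j)
      hHTmeas hHT0 hHT1 hantiT hmT
    -- reverse inequality for Top-K via 1 - HT
    have hmT' : ∀ ω, (1 - mTopK j ω) = (fun c z => 1 - HT c z) (C j ω) (Zj ω) := by
      intro ω; rw [hmT ω]
    have hkeyT' := aux_key_le μ (hCmeas j) hZmeas hindep (hCint j) (hCpos j)
      (H := fun c z => 1 - HT c z) (measurable_const.sub hHTmeas)
      (fun c z => by show (0:ℝ) ≤ 1 - HT c z; linarith [hHT1 c z])
      (fun c z => by show 1 - HT c z ≤ 1; linarith [hHT0 c z])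
      (Filter.Eventually.of_forall fun z c c' _ _ _ => le_of_eq rfl) hmT'
    -- measurability and integrability of the masks
    have hmTmeas : Measurable (mTopK j) := by
      have : mTopK j = fun ω => HT (C j ω) (Zj ω) := funext hmT
      rw [this]
      exact hHTmeas.comp ((hCmeas j).prodMk hZmeas)
    have hmCmeas : Measurable (mCWMP j) := by
      have : mCWMP j = fun ω => HC (C j ω) (Zj ω) := funext hmC
      rw [this]
      exact hHCmeas.comp ((hCmeas j).prodMk hZmeas)
    have hmTbd : ∀ ω, |mTopK j ω| ≤ 1 := fun ω => by
      rw [hmT ω]; exact abs_le.2 ⟨by linarith [hHT0 (C j ω) (Zj ω)], hHT1 (C j ω) (Zj ω)⟩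
    have hmCbd : ∀ ω, |mCWMP j ω| ≤ 1 := fun ω => by
      rw [hmC ω]; exact abs_le.2 ⟨by linarith [hHC0 (C j ω) (Zj ω)], hHC1 (C j ω) (Zj ω)⟩
    have hmTint : Integrable (mTopK j) μ :=
      (integrable_const (1:ℝ)).mono' hmTmeas.aestronglyMeasurable
        (Filter.Eventually.of_forall fun ω => by rw [Real.norm_eq_abs]; simpa using hmTbd ω)
    have hmCint : Integrable (mCWMP j) μ :=
      (integrable_const (1:ℝ)).mono' hmCmeas.aestronglyMeasurable
        (Filter.Eventually.of_forall fun ω => by rw [Real.norm_eq_abs]; simpa using hmCbd ω)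
    have hmTCint : Integrable (fun ω => mTopK j ω * C j ω) μ := by
      refine (hCint j).abs.mono' (hmTmeas.mul (hCmeas j)).aestronglyMeasurable
        (Filter.Eventually.of_forall fun ω => ?_)
      rw [Real.norm_eq_abs, abs_mul]
      calc |mTopK j ω| * |C j ω| ≤ 1 * |C j ω| :=
        mul_le_mul_of_nonneg_right (hmTbd ω) (abs_nonneg _)
      _ = |C j ω| := one_mul _
    have hmCCint : Integrable (fun ω => mCWMP j ω * C j ω) μ := by
      refine (hCint j).abs.mono' (hmCmeas.mul (hCmeas j)).aestronglyMeasurable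
        (Filter.Eventually.of_forall fun ω => ?_)
      rw [Real.norm_eq_abs, abs_mul]
      calc |mCWMP j ω| * |C j ω| ≤ 1 * |C j ω| :=
        mul_le_mul_of_nonneg_right (hmCbd ω) (abs_nonneg _)
      _ = |C j ω| := one_mul _
    -- combine the two Top-K inequalities into an equality
    have e1 : ∫ ω, (1 - mTopK j ω) * C j ω ∂μ
        = ∫ ω, C j ω ∂μ - ∫ ω, mTopK j ω * C j ω ∂μ := by
      rw [← integral_sub (hCint j) hmTCint]
      exact integral_congr_ae (Filter.Eventually.of_forall fun ω => by ring)
    have e2 : ∫ ω, (1 - mTopK j ω) ∂μ = 1 - ∫ ω, mTopK j ω ∂μ := by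
      rw [integral_sub (integrable_const 1) hmTint]
      simp
    rw [e1, e2, sub_mul, one_mul] at hkeyT'
    have hTeq : ∫ ω, mTopK j ω * C j ω ∂μ = (∫ ω, mTopK j ω ∂μ) * ∫ ω, C j ω ∂μ :=
      le_antisymm hkeyT (by linarith)
    refine ⟨hmTCint, hmCCint, hmTint, hmCint, ?_, ?_⟩
    · rw [hTeq, hCeq]
    · rw [← hCeq]; exact hkeyC
  -- total mass of the masks
  have hTmass : ∑ j, ∫ ω, mTopK j ω ∂μ = (k : ℝ) := by
    rw [← integral_finset_sum _ fun j _ => (hmain j).2.2.1]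
    have : ∀ᵐ ω ∂μ, (∑ j, mTopK j ω) = (k : ℝ) := by
      filter_upwards [hties] with ω hω
      calc (∑ j, mTopK j ω)
          = ∑ j, (if (Finset.univ.filter fun i => G j ω ≤ G i ω).card ≤ k
              then (1:ℝ) else 0) := Finset.sum_congr rfl fun j _ => hTopK j ω
        _ = (k : ℝ) := aux_sum_rank hk (fun i => G i ω) hω.1
    rw [integral_congr_ae this]
    simp
  have hCmass : ∑ j, ∫ ω, mCWMP j ω ∂μ = (k : ℝ) := by
    rw [← integral_finset_sum _ fun j _ => (hmain j).2.2.2.1]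
    have : ∀ᵐ ω ∂μ, (∑ j, mCWMP j ω) = (k : ℝ) := by
      filter_upwards [hties] with ω hω
      calc (∑ j, mCWMP j ω)
          = ∑ j, (if (Finset.univ.filter
              fun i => G j ω / C j ω ≤ G i ω / C i ω).card ≤ k
              then (1:ℝ) else 0) := Finset.sum_congr rfl fun j _ => hCWMP j ω
        _ = (k : ℝ) := aux_sum_rank hk (fun i => G i ω / C i ω) hω.2
    rw [integral_congr_ae this]
    simp
  have hsumT : ∫ ω, ∑ j, mTopK j ω * C j ω ∂μ = (k : ℝ) * ∫ ω, C 0 ω ∂μ := by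
    rw [integral_finset_sum _ fun j _ => (hmain j).1]
    calc ∑ j, ∫ ω, mTopK j ω * C j ω ∂μ
        = ∑ j, (∫ ω, mTopK j ω ∂μ) * ∫ ω, C 0 ω ∂μ :=
          Finset.sum_congr rfl fun j _ => (hmain j).2.2.2.2.1
      _ = (∑ j, ∫ ω, mTopK j ω ∂μ) * ∫ ω, C 0 ω ∂μ := (Finset.sum_mul _ _ _).symm
      _ = (k : ℝ) * ∫ ω, C 0 ω ∂μ := by rw [hTmass]
  refine ⟨?_, hsumT⟩
  rw [hsumT, integral_finset_sum _ fun j _ => (hmain j).2.1]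
  calc ∑ j, ∫ ω, mCWMP j ω * C j ω ∂μ
      ≤ ∑ j, (∫ ω, mCWMP j ω ∂μ) * ∫ ω, C 0 ω ∂μ :=
        Finset.sum_le_sum fun j _ => (hmain j).2.2.2.2.2
    _ = (∑ j, ∫ ω, mCWMP j ω ∂μ) * ∫ ω, C 0 ω ∂μ := (Finset.sum_mul _ _ _).symm
    _ = (k : ℝ) * ∫ ω, C 0 ω ∂μ := by rw [hCmass]
end
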